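/- In a geometric tree (the geometric realization of a finite connected acyclic graph), a subset is path-connected if and only if it is connected. -/

import Mathlib

open scoped Classical

noncomputable section

instance dartTop {V : Type*} (G : SimpleGraph V) : TopologicalSpace G.Dart := ⊥

/-- Gluing relation for the geometric realization of a graph: one copy of `[0,1]` per
oriented edge, opposite orientations identified by `t ↦ 1-t`, and starting points of edges
with the same initial vertex identified. -/
def treeRel {V : Type*} (G : SimpleGraph V) :
    (G.Dart × ↥(Set.Icc (0:ℝ) 1)) → (G.Dart × ↥(Set.Icc (0:ℝ) 1)) → Prop :=
  fun p q =>
    (p.1 = q.1.symm ∧ (p.2 : ℝ) = 1 - (q.2 : ℝ)) ∨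
    (p.1.toProd.1 = q.1.toProd.1 ∧ (p.2 : ℝ) = 0 ∧ (q.2 : ℝ) = 0)

/-- The geometric realization of a graph. -/
def TreeSpace {V : Type*} (G : SimpleGraph V) := Quot (treeRel G)

instance {V : Type*} (G : SimpleGraph V) : TopologicalSpace (TreeSpace G) :=
  instTopologicalSpaceQuot

namespace TreeProof

open SimpleGraph

instance {V : Type*} (G : SimpleGraph V) : DiscreteTopology G.Dart := ⟨rfl⟩

variable {V : Type} {G : SimpleGraph V}

abbrev I01 := ↥(Set.Icc (0:ℝ) 1)

def pt (d : G.Dart) (t : I01) : TreeSpace G := Quot.mk _ (d, t)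

def i0 : I01 := ⟨0, by norm_num⟩
def i1 : I01 := ⟨1, by norm_num⟩
def iflip (t : I01) : I01 := ⟨1 - t, by constructor <;> [linarith [t.2.2]; linarith [t.2.1]]⟩

lemma pt_val_eq {d : G.Dart} {s t : I01} (h : (s:ℝ) = t) : pt d s = pt d t := by
  congr 1; exact Subtype.ext h

lemma pt_flip (d : G.Dart) (t : I01) : pt d t = pt d.symm (iflip t) :=
  Quot.sound (Or.inl ⟨(d.symm_symm).symm, by simp [iflip]⟩)

lemma pt_flip' (d : G.Dart) (t : I01) : pt d.symm t = pt d (iflip t) := by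
  rw [pt_flip d.symm t, d.symm_symm]

lemma pt_zero_eq {d e : G.Dart} (h : d.toProd.1 = e.toProd.1) : pt d i0 = pt e i0 :=
  Quot.sound (Or.inr ⟨h, rfl, rfl⟩)

/-- interpolation of a vertex function along edges -/
def interp (h : V → ℝ) : TreeSpace G → ℝ :=
  Quot.lift (fun p => (1 - (p.2:ℝ)) * h p.1.toProd.1 + (p.2:ℝ) * h p.1.toProd.2) (by
    rintro ⟨d, s⟩ ⟨e, r⟩ (⟨hde, hsr⟩ | ⟨hde, hs, hr⟩)
    · subst hde
      show (1 - (s:ℝ)) * h e.toProd.2 + (s:ℝ) * h e.toProd.1 = _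
      rw [hsr]; ring
    · show (1 - (s:ℝ)) * h d.toProd.1 + (s:ℝ) * h d.toProd.2
          = (1 - (r:ℝ)) * h e.toProd.1 + (r:ℝ) * h e.toProd.2
      simp only at hde hs hr
      rw [hde, hs, hr]; ring)

lemma interp_pt (h : V → ℝ) (d : G.Dart) (t : I01) :
    interp h (pt d t) = (1 - (t:ℝ)) * h d.toProd.1 + (t:ℝ) * h d.toProd.2 := rfl

lemma continuous_interp (h : V → ℝ) : Continuous (interp (G := G) h) := by
  apply continuous_quot_lift
  have h1 : Continuous fun p : G.Dart × I01 => h p.1.toProd.1 :=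
    (continuous_of_discreteTopology (f := fun d : G.Dart => h d.toProd.1)).comp continuous_fst
  have h2 : Continuous fun p : G.Dart × I01 => h p.1.toProd.2 :=
    (continuous_of_discreteTopology (f := fun d : G.Dart => h d.toProd.2)).comp continuous_fst
  have h3 : Continuous fun p : G.Dart × I01 => ((p.2 : ℝ)) :=
    continuous_subtype_val.comp continuous_snd
  exact ((continuous_const.sub h3).mul h1).add (h3.mul h2)

lemma sep {S : Set (TreeSpace G)} (hS : IsPreconnected S) (h : V → ℝ) (c : ℝ)
    {x y : TreeSpace G} (hx : x ∈ S) (hy : y ∈ S)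
    (hfx : interp h x < c) (hfy : c < interp h y)
    (hne : ∀ z ∈ S, interp h z ≠ c) : False := by
  obtain ⟨z, hzS, hz1⟩ := hS (interp h ⁻¹' Set.Iio c) (interp h ⁻¹' Set.Ioi c)
    (isOpen_Iio.preimage (continuous_interp h)) (isOpen_Ioi.preimage (continuous_interp h))
    (fun z hz => by
      have h' : interp h z < c ∨ c < interp h z := lt_or_gt_of_ne (hne z hz)
      exact h'.imp (fun hh => hh) (fun hh => hh))
    ⟨x, hx, by simpa using hfx⟩ ⟨y, hy, by simpa using hfy⟩
  simp only [Set.mem_preimage, Set.mem_Iio, Set.mem_Ioi, Set.mem_inter_iff] at hz1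
  obtain ⟨h1, h2⟩ := hz1
  linarith

/-! ### Edge cut -/

def edgeH (d : G.Dart) : V → ℝ :=
  fun v => if (G.deleteEdges {d.edge}).Reachable d.toProd.1 v then 0 else 1

lemma edgeH_fst (d : G.Dart) : edgeH d d.toProd.1 = 0 := if_pos (Reachable.refl _)

lemma bridge_not_reach (hacyc : G.IsAcyclic) (d : G.Dart) :
    ¬ (G.deleteEdges {d.edge}).Reachable d.toProd.1 d.toProd.2 := by
  have hb := (SimpleGraph.isAcyclic_iff_forall_adj_isBridge.mp hacyc) d.adj
  rw [SimpleGraph.isBridge_iff] at hb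
  have : d.edge = s(d.toProd.1, d.toProd.2) := by
    rw [SimpleGraph.Dart.edge]
  rw [this]
  exact hb

lemma edgeH_snd (hacyc : G.IsAcyclic) (d : G.Dart) : edgeH d d.toProd.2 = 1 :=
  if_neg (bridge_not_reach hacyc d)

lemma edgeH_mem (d : G.Dart) (v : V) : edgeH d v = 0 ∨ edgeH d v = 1 := by
  unfold edgeH; split <;> simp

lemma dart_adj_del {d e : G.Dart} (hed : e.edge ≠ d.edge) :
    (G.deleteEdges {d.edge}).Adj e.toProd.1 e.toProd.2 := by
  rw [SimpleGraph.deleteEdges_adj]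
  refine ⟨e.adj, ?_⟩
  simpa [SimpleGraph.Dart.edge] using hed

lemma edgeH_const {d e : G.Dart} (hed : e.edge ≠ d.edge) :
    edgeH d e.toProd.1 = edgeH d e.toProd.2 := by
  have hadj := dart_adj_del hed
  unfold edgeH
  by_cases hr : (G.deleteEdges {d.edge}).Reachable d.toProd.1 e.toProd.1
  · rw [if_pos hr, if_pos (hr.trans hadj.reachable)]
  · rw [if_neg hr, if_neg (fun h => hr (h.trans hadj.symm.reachable))]

lemma edge_fiber (hacyc : G.IsAcyclic) (d : G.Dart) (t : I01)
    (h0 : 0 < (t:ℝ)) (h1 : (t:ℝ) < 1) {z : TreeSpace G}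
    (hz : interp (edgeH d) z = t) : z = pt d t := by
  induction z using Quot.ind with
  | _ p =>
    obtain ⟨e, s⟩ := p
    have hz' : (1 - (s:ℝ)) * edgeH d e.toProd.1 + (s:ℝ) * edgeH d e.toProd.2 = t := hz
    by_cases hed : e.edge = d.edge
    · rcases (SimpleGraph.dart_edge_eq_iff e d).mp hed with rfl | rfl
      · rw [edgeH_fst, edgeH_snd hacyc] at hz'
        have : (s:ℝ) = t := by linarith
        exact pt_val_eq this
      · show pt d.symm s = pt d t
        rw [pt_flip' d s]
        apply pt_val_eq
        have e1 : d.symm.toProd.1 = d.toProd.2 := rfl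
        have e2 : d.symm.toProd.2 = d.toProd.1 := rfl
        rw [e1, e2, edgeH_fst, edgeH_snd hacyc] at hz'
        show (1:ℝ) - s = t
        linarith
    · exfalso
      rw [← edgeH_const hed] at hz'
      rcases edgeH_mem d e.toProd.1 with h | h <;> rw [h] at hz' <;> nlinarith

lemma edge_mem {S : Set (TreeSpace G)} (hS : IsPreconnected S) (hacyc : G.IsAcyclic)
    (d : G.Dart) {a b t : I01} (ha : pt d a ∈ S) (hb : pt d b ∈ S)
    (hat : (a:ℝ) < t) (htb : (t:ℝ) < b) : pt d t ∈ S := by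
  by_contra hm
  refine sep hS (edgeH d) t ha hb ?_ ?_ ?_
  · rw [interp_pt, edgeH_fst, edgeH_snd hacyc]; simpa using hat
  · rw [interp_pt, edgeH_fst, edgeH_snd hacyc]; simpa using htb
  · intro z hzS hzc
    have h0 : (0:ℝ) < t := lt_of_le_of_lt a.2.1 hat
    have h1 : (t:ℝ) < 1 := lt_of_lt_of_le htb b.2.2
    rw [edge_fiber hacyc d t h0 h1 hzc] at hzS
    exact hm hzS

/-! ### Segments -/

lemma seg_joined_aux {S : Set (TreeSpace G)} (hS : IsPreconnected S) (hacyc : G.IsAcyclic)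
    (d : G.Dart) {a b : I01} (hab : (a:ℝ) ≤ b) (ha : pt d a ∈ S) (hb : pt d b ∈ S) :
    JoinedIn S (pt d a) (pt d b) := by
  have hmem : ∀ τ : unitInterval, (1 - (τ:ℝ)) * a + τ * b ∈ Set.Icc (0:ℝ) 1 := by
    intro τ
    constructor
    · nlinarith [τ.2.1, τ.2.2, a.2.1, b.2.1]
    · nlinarith [τ.2.1, τ.2.2, a.2.2, b.2.2]
  let f : unitInterval → TreeSpace G := fun τ => pt d ⟨(1 - (τ:ℝ)) * a + τ * b, hmem τ⟩
  have hcont : Continuous f := by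
    apply Continuous.comp continuous_quot_mk
    apply Continuous.prodMk continuous_const
    apply Continuous.subtype_mk
    exact ((continuous_const.sub continuous_subtype_val).mul continuous_const).add
      (continuous_subtype_val.mul continuous_const)
  have hsrc : f 0 = pt d a := by
    apply pt_val_eq; show (1 - (0:ℝ)) * a + 0 * b = a; ring
  have htgt : f 1 = pt d b := by
    apply pt_val_eq; show (1 - (1:ℝ)) * a + 1 * b = b; ring
  refine ⟨⟨⟨f, hcont⟩, hsrc, htgt⟩, ?_⟩
  intro τ
  show pt d ⟨(1 - (τ:ℝ)) * a + τ * b, hmem τ⟩ ∈ S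
  set u : I01 := ⟨(1 - (τ:ℝ)) * a + τ * b, hmem τ⟩ with hu
  have hau : (a:ℝ) ≤ u := by
    show (a:ℝ) ≤ (1 - (τ:ℝ)) * a + τ * b
    nlinarith [τ.2.1, τ.2.2]
  have hub : (u:ℝ) ≤ b := by
    show (1 - (τ:ℝ)) * a + τ * b ≤ (b:ℝ)
    nlinarith [τ.2.1, τ.2.2]
  rcases eq_or_lt_of_le hau with h | h
  · rw [← pt_val_eq h]; exact ha
  rcases eq_or_lt_of_le hub with h' | h'
  · rw [pt_val_eq h']; exact hb
  exact edge_mem hS hacyc d ha hb h h'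

lemma seg_joined {S : Set (TreeSpace G)} (hS : IsPreconnected S) (hacyc : G.IsAcyclic)
    (d : G.Dart) {a b : I01} (ha : pt d a ∈ S) (hb : pt d b ∈ S) :
    JoinedIn S (pt d a) (pt d b) := by
  rcases le_total (a:ℝ) (b:ℝ) with h | h
  · exact seg_joined_aux hS hacyc d h ha hb
  · exact (seg_joined_aux hS hacyc d h hb ha).symm

/-! ### Vertex cut -/

def starSet (w : V) : Set (Sym2 V) := {e | w ∈ e}

def vtxH (w a₀ : V) : V → ℝ :=
  fun v => if v = w then 1/2 else if (G.deleteEdges (starSet w)).Reachable a₀ v then 0 else 1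

lemma vtxH_self (w a₀ : V) : vtxH (G := G) w a₀ w = 1/2 := if_pos rfl

lemma vtxH_anchor {w a₀ : V} (h : a₀ ≠ w) : vtxH (G := G) w a₀ a₀ = 0 := by
  rw [vtxH, if_neg h, if_pos (Reachable.refl _)]

lemma vtxH_one {w a₀ v : V} (h : v ≠ w)
    (hr : ¬ (G.deleteEdges (starSet w)).Reachable a₀ v) : vtxH (G := G) w a₀ v = 1 := by
  rw [vtxH, if_neg h, if_neg hr]

lemma vtxH_mem {w a₀ v : V} (h : v ≠ w) :
    vtxH (G := G) w a₀ v = 0 ∨ vtxH (G := G) w a₀ v = 1 := by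
  rw [vtxH, if_neg h]; split <;> simp

lemma vtx_dart_adj_del {w : V} {e : G.Dart} (h1 : e.toProd.1 ≠ w) (h2 : e.toProd.2 ≠ w) :
    (G.deleteEdges (starSet w)).Adj e.toProd.1 e.toProd.2 := by
  rw [SimpleGraph.deleteEdges_adj]
  refine ⟨e.adj, ?_⟩
  intro hmem
  rw [starSet, Set.mem_setOf_eq, Sym2.mem_iff] at hmem
  rcases hmem with h | h
  · exact h1 h.symm
  · exact h2 h.symm

lemma vtxH_const {w a₀ : V} {e : G.Dart} (h1 : e.toProd.1 ≠ w) (h2 : e.toProd.2 ≠ w) :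
    vtxH (G := G) w a₀ e.toProd.1 = vtxH (G := G) w a₀ e.toProd.2 := by
  have hadj := vtx_dart_adj_del (G := G) h1 h2
  rw [vtxH, vtxH, if_neg h1, if_neg h2]
  by_cases hr : (G.deleteEdges (starSet w)).Reachable a₀ e.toProd.1
  · rw [if_pos hr, if_pos (hr.trans hadj.reachable)]
  · rw [if_neg hr, if_neg (fun h => hr (h.trans hadj.symm.reachable))]

lemma vtx_fiber {w a₀ : V} (ha : a₀ ≠ w) {z : TreeSpace G}
    (hz : interp (vtxH (G := G) w a₀) z = 1/2) :
    ∃ e : G.Dart, e.toProd.1 = w ∧ z = pt e i0 := by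
  induction z using Quot.ind with
  | _ p =>
    obtain ⟨e, s⟩ := p
    have hz' : (1 - (s:ℝ)) * vtxH (G := G) w a₀ e.toProd.1
        + (s:ℝ) * vtxH (G := G) w a₀ e.toProd.2 = 1/2 := hz
    by_cases hf : e.toProd.1 = w
    · have hs : e.toProd.2 ≠ w := fun h => e.fst_ne_snd (hf.trans h.symm)
      rw [hf, vtxH_self] at hz'
      have hs0 : (s:ℝ) = 0 := by
        rcases vtxH_mem (G := G) (a₀ := a₀) hs with h | h <;> rw [h] at hz' <;> linarith
      refine ⟨e, hf, ?_⟩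
      show pt e s = pt e i0
      exact pt_val_eq hs0
    · by_cases hs : e.toProd.2 = w
      · rw [hs, vtxH_self] at hz'
        have hs1 : (s:ℝ) = 1 := by
          rcases vtxH_mem (G := G) (a₀ := a₀) hf with h | h <;> rw [h] at hz' <;> linarith
        refine ⟨e.symm, hs, ?_⟩
        show pt e s = pt e.symm i0
        rw [pt_flip e s]
        apply pt_val_eq
        show (1:ℝ) - s = 0
        rw [hs1]; ring
      · exfalso
        rw [← vtxH_const (a₀ := a₀) hf hs] at hz'
        rcases vtxH_mem (G := G) (a₀ := a₀) hf with h | h <;> rw [h] at hz' <;> nlinarith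

lemma cut_mem {S : Set (TreeSpace G)} (hS : IsPreconnected S) {w a₀ : V} (ha : a₀ ≠ w)
    {x y : TreeSpace G} (hx : x ∈ S) (hy : y ∈ S)
    (hfx : interp (vtxH (G := G) w a₀) x < 1/2) (hfy : 1/2 < interp (vtxH (G := G) w a₀) y)
    (d : G.Dart) (hd : d.toProd.1 = w) : pt d i0 ∈ S := by
  by_contra hm
  refine sep hS _ (1/2) hx hy hfx hfy ?_
  intro z hzS hzc
  obtain ⟨e, he, rfl⟩ := vtx_fiber ha hzc
  rw [pt_zero_eq (he.trans hd.symm)] at hzS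
  exact hm hzS

lemma not_mem_support {w : V} : ∀ {u v : V} (W : (G.deleteEdges (starSet w)).Walk u v),
    u ≠ w → v ≠ w → w ∉ W.support := by
  intro u v W
  induction W with
  | nil => intro hu _ h; simp at h; exact hu h.symm
  | @cons u x v hadj p ih =>
    intro hu hv h
    rw [SimpleGraph.Walk.support_cons, List.mem_cons] at h
    have hx : x ≠ w := by
      rw [SimpleGraph.deleteEdges_adj] at hadj
      intro hxw
      exact hadj.2 (by rw [starSet, Set.mem_setOf_eq, Sym2.mem_iff]; right; exact hxw.symm)
    rcases h with h | h
    · exact hu h.symm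
    · exact ih hx hv h

lemma not_reach_del (hacyc : G.IsAcyclic) {u v w : V} (p : G.Walk u v) (hp : p.IsPath)
    (hw : w ∈ p.support) (hu : u ≠ w) (hv : v ≠ w) :
    ¬ (G.deleteEdges (starSet w)).Reachable u v := by
  rintro ⟨W⟩
  have hws := not_mem_support W hu hv
  let W' := W.mapLe (SimpleGraph.deleteEdges_le _)
  have hws' : w ∉ W'.support := by
    intro hmem
    rw [SimpleGraph.Walk.support_map, List.mem_map] at hmem
    obtain ⟨x, hx, hfx⟩ := hmem
    rw [SimpleGraph.Hom.ofLE_apply] at hfx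
    exact hws (hfx ▸ hx)
  have hpq : (⟨p, hp⟩ : G.Path u v) = W'.toPath := hacyc.path_unique _ _
  have hwq : w ∈ (W'.toPath : G.Walk u v).support := by
    rw [← hpq]; exact hw
  exact hws' (SimpleGraph.Walk.support_toPath_subset W' hwq)

lemma walk_joined {S : Set (TreeSpace G)} (hS : IsPreconnected S) (hacyc : G.IsAcyclic) :
    ∀ {u v : V} (p : G.Walk u v), p.IsPath → ∀ (d e : G.Dart),
      d.toProd.1 = u → e.toProd.1 = v → pt d i0 ∈ S → pt e i0 ∈ S →
      JoinedIn S (pt d i0) (pt e i0) := by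
  intro u v p
  induction p with
  | nil =>
    intro _ d e hd he hdS heS
    rw [pt_zero_eq (hd.trans he.symm)]
    exact JoinedIn.refl heS
  | @cons u u' v hadj q ih =>
    intro hp d e hd he hdS heS
    set d' : G.Dart := ⟨(u, u'), hadj⟩ with hd'
    have hu : u ≠ u' := hadj.ne
    have hdd' : pt (G := G) d i0 = pt d' i0 := pt_zero_eq hd
    have hd'S : pt d' i0 ∈ S := hdd' ▸ hdS
    have hymm : pt (G := G) d' i1 = pt d'.symm i0 := by
      rw [pt_flip d' i1]
      apply pt_val_eq
      show (1:ℝ) - 1 = 0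
      ring
    have hu'S : pt d'.symm i0 ∈ S := by
      by_cases hu'v : u' = v
      · have : pt (G := G) d'.symm i0 = pt e i0 :=
          pt_zero_eq (show u' = e.toProd.1 from hu'v.trans he.symm)
        rw [this]; exact heS
      · refine cut_mem hS (w := u') (a₀ := u) hu hdS heS ?_ ?_ d'.symm rfl
        · rw [interp_pt, hd, vtxH_anchor hu]
          show (1 - (0:ℝ)) * 0 + 0 * _ < 1/2
          norm_num
        · rw [interp_pt, he]
          have hv : v ≠ u' := fun h => hu'v h.symm
          have hnr : ¬ (G.deleteEdges (starSet u')).Reachable u v := by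
            apply not_reach_del hacyc (SimpleGraph.Walk.cons hadj q) hp
            · rw [SimpleGraph.Walk.support_cons, List.mem_cons]
              right; exact SimpleGraph.Walk.start_mem_support q
            · exact hu
            · exact hv
          rw [vtxH_one hv hnr]
          show (1/2:ℝ) < (1 - 0) * 1 + 0 * _
          norm_num
    have hd'1S : pt d' i1 ∈ S := by rw [hymm]; exact hu'S
    have hseg : JoinedIn S (pt d' i0) (pt d' i1) := seg_joined hS hacyc d' hd'S hd'1S
    have htail : JoinedIn S (pt d'.symm i0) (pt e i0) :=
      ih hp.of_cons d'.symm e rfl he hu'S heS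
    rw [hdd']
    exact hseg.trans (hymm ▸ htail)

/-! ### From an interior point to a vertex -/

lemma interior_to_vertex {S : Set (TreeSpace G)} (hS : IsPreconnected S) (hacyc : G.IsAcyclic)
    (d e : G.Dart) (a b : I01) (hx : pt d a ∈ S) (hy : pt e b ∈ S) (ha1 : (a:ℝ) < 1)
    (hnot : ∀ s : I01, pt e b ≠ pt d s)
    (hside : ¬ (G.deleteEdges {d.edge}).Reachable d.toProd.1 e.toProd.1) :
    pt d.symm i0 ∈ S ∧ JoinedIn S (pt d a) (pt d.symm i0) := by
  set w := d.toProd.2 with hw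
  set a₀ := d.toProd.1 with ha₀
  have haw : a₀ ≠ w := d.adj.ne
  have hed : e.edge ≠ d.edge := by
    intro h
    rcases (SimpleGraph.dart_edge_eq_iff e d).mp h with h' | h'
    · exact hnot b (by rw [h'])
    · exact hnot (iflip b) (by rw [h', pt_flip'])
  have hRle : G.deleteEdges (starSet w) ≤ G.deleteEdges {d.edge} := by
    apply SimpleGraph.deleteEdges_anti
    intro x hx
    rw [Set.mem_singleton_iff] at hx
    subst hx
    rw [starSet, Set.mem_setOf_eq, SimpleGraph.Dart.edge, Sym2.mem_iff]
    right; rfl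
  have hreach2 : ∀ z : V, ¬ (G.deleteEdges {d.edge}).Reachable a₀ z →
      ¬ (G.deleteEdges (starSet w)).Reachable a₀ z :=
    fun z h hr => h (hr.mono hRle)
  have hsnd_side : ¬ (G.deleteEdges {d.edge}).Reachable a₀ e.toProd.2 :=
    fun h => hside (h.trans (dart_adj_del hed).symm.reachable)
  have hsymm0 : pt (G := G) d.symm i0 = pt d i1 := by
    rw [pt_flip' d i0]; apply pt_val_eq; show (1:ℝ) - 0 = 1; ring
  have hm1 : pt d.symm i0 ∈ S := by
    by_contra hm
    refine sep hS (vtxH (G := G) w a₀) (1/2) hx hy ?_ ?_ ?_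
    · rw [interp_pt, ← ha₀, ← hw, vtxH_anchor haw, vtxH_self]
      nlinarith [a.2.1]
    · rw [interp_pt]
      by_cases hef : e.toProd.1 = w
      · have hes : e.toProd.2 ≠ w := fun h => e.fst_ne_snd (hef.trans h.symm)
        have hb0 : (0:ℝ) < b := by
          rcases lt_or_eq_of_le b.2.1 with h | h
          · exact h
          · exfalso
            apply hnot (iflip i0)
            calc pt e b = pt e i0 := pt_val_eq h.symm
              _ = pt d.symm i0 := pt_zero_eq hef
              _ = pt d (iflip i0) := pt_flip' d i0
        rw [hef, vtxH_self, vtxH_one hes (hreach2 _ hsnd_side)]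
        nlinarith [b.2.2]
      · by_cases hes : e.toProd.2 = w
        · have hb1 : (b:ℝ) < 1 := by
            rcases lt_or_eq_of_le b.2.2 with h | h
            · exact h
            · exfalso
              apply hnot (iflip i0)
              calc pt e b = pt e i1 := pt_val_eq h
                _ = pt e.symm (iflip i1) := pt_flip e i1
                _ = pt e.symm i0 := pt_val_eq (by show (1:ℝ) - 1 = 0; ring)
                _ = pt d.symm i0 := pt_zero_eq hes
                _ = pt d (iflip i0) := pt_flip' d i0
          rw [hes, vtxH_self, vtxH_one hef (hreach2 _ hside)]
          nlinarith [b.2.1]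
        · rw [vtxH_one hef (hreach2 _ hside), vtxH_one hes (hreach2 _ hsnd_side)]
          nlinarith [b.2.1, b.2.2]
    · intro z hzS hzc
      obtain ⟨e', he', rfl⟩ := vtx_fiber haw hzc
      rw [pt_zero_eq (show e'.toProd.1 = d.symm.toProd.1 from he')] at hzS
      exact hm hzS
  refine ⟨hm1, ?_⟩
  have hm1' : pt d i1 ∈ S := hsymm0 ▸ hm1
  have := seg_joined hS hacyc d hx hm1'
  rw [← hsymm0] at this
  exact this

lemma x_to_vertex {S : Set (TreeSpace G)} (hS : IsPreconnected S) (hacyc : G.IsAcyclic)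
    (d e : G.Dart) (a b : I01) (hx : pt d a ∈ S) (hy : pt e b ∈ S)
    (hnot : ∀ s : I01, pt e b ≠ pt d s) :
    ∃ d' : G.Dart, pt d' i0 ∈ S ∧ JoinedIn S (pt d a) (pt d' i0) := by
  rcases eq_or_lt_of_le a.2.1 with ha0 | ha0
  · have hpt : pt (G := G) d a = pt d i0 := pt_val_eq ha0.symm
    rw [hpt] at hx ⊢
    exact ⟨d, hx, JoinedIn.refl hx⟩
  rcases eq_or_lt_of_le a.2.2 with ha1 | ha1
  · have hpt : pt (G := G) d a = pt d.symm i0 := by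
      calc pt d a = pt d i1 := pt_val_eq ha1
        _ = pt d.symm (iflip i1) := pt_flip d i1
        _ = pt d.symm i0 := pt_val_eq (by show (1:ℝ) - 1 = 0; ring)
    rw [hpt] at hx ⊢
    exact ⟨d.symm, hx, JoinedIn.refl hx⟩
  by_cases hside : (G.deleteEdges {d.edge}).Reachable d.toProd.1 e.toProd.1
  · -- apply to d.symm
    have hx' : pt d.symm (iflip a) ∈ S := by rw [← pt_flip]; exact hx
    have ha1' : ((iflip a : I01) : ℝ) < 1 := by
      show (1:ℝ) - a < 1; linarith
    have hnot' : ∀ s : I01, pt e b ≠ pt d.symm s := by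
      intro s h
      exact hnot (iflip s) (by rw [h, pt_flip'])
    have hside' : ¬ (G.deleteEdges {d.symm.edge}).Reachable d.symm.toProd.1 e.toProd.1 := by
      rw [SimpleGraph.Dart.edge_symm]
      intro h
      exact bridge_not_reach hacyc d (hside.trans h.symm)
    obtain ⟨hmem, hj⟩ := interior_to_vertex hS hacyc d.symm e (iflip a) b hx' hy ha1' hnot' hside'
    rw [SimpleGraph.Dart.symm_symm] at hmem hj
    rw [← pt_flip] at hj
    exact ⟨d, hmem, hj⟩
  · obtain ⟨hmem, hj⟩ := interior_to_vertex hS hacyc d e a b hx hy ha1 hnot hside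
    exact ⟨d.symm, hmem, hj⟩

lemma main {S : Set (TreeSpace G)} (hconn : G.Connected) (hacyc : G.IsAcyclic)
    (hpre : IsPreconnected S) {x y : TreeSpace G} (hx : x ∈ S) (hy : y ∈ S) :
    JoinedIn S x y := by
  obtain ⟨⟨d, a⟩, rfl⟩ := Quot.exists_rep x
  obtain ⟨⟨e, b⟩, rfl⟩ := Quot.exists_rep y
  show JoinedIn S (pt d a) (pt e b)
  have hx' : pt d a ∈ S := hx
  have hy' : pt e b ∈ S := hy
  by_cases hA : ∃ s : I01, pt e b = pt d s
  · obtain ⟨s, hs⟩ := hA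
    rw [hs] at hy' ⊢
    exact seg_joined hpre hacyc d hx' hy'
  by_cases hB : ∃ s : I01, pt d a = pt e s
  · obtain ⟨s, hs⟩ := hB
    rw [hs] at hx' ⊢
    exact seg_joined hpre hacyc e hx' hy'
  push_neg at hA hB
  obtain ⟨d1, hd1S, hd1J⟩ := x_to_vertex hpre hacyc d e a b hx' hy' hA
  obtain ⟨e1, he1S, he1J⟩ := x_to_vertex hpre hacyc e d b a hy' hx' hB
  obtain ⟨W⟩ := hconn.preconnected d1.toProd.1 e1.toProd.1
  have hwj := walk_joined hpre hacyc (W.toPath : G.Walk _ _) W.toPath.2 d1 e1 rfl rfl hd1S he1S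
  exact hd1J.trans (hwj.trans he1J.symm)

end TreeProof

/-- In a geometric tree (the geometric realization of a finite connected acyclic graph),
a subset is path-connected if and only if it is connected. -/
theorem stmt0 {V : Type} [Fintype V] (G : SimpleGraph V)
    (hconn : G.Connected) (hacyc : G.IsAcyclic) (S : Set (TreeSpace G)) :
    IsPathConnected S ↔ IsConnected S := by
  constructor
  · exact fun h => h.isConnected
  · rintro ⟨⟨x₀, hx₀⟩, hpre⟩
    refine ⟨x₀, hx₀, ?_⟩
    intro y hy
    exact TreeProof.main hconn hacyc hpre hx₀ hy
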